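/- Every subset I ⊆ {2,...,n-1} with no two consecutive elements is realized as the interior peak set of some permutation π ∈ S_n; i.e., the map π ↦ Pe(π) from S_n to subsets of {2,...,n-1} with no consecutive elements is surjective. -/
import Mathlib


/-- A permutation of `{1,…,n}`, modeled as a permutation of `ℕ` fixing `0` and all `i > n`. -/
def IsSn (n : ℕ) (π : Equiv.Perm ℕ) : Prop := ∀ i : ℕ, i = 0 ∨ n < i → π i = i

/-- The interior peak set `Pe(π) = {i ∈ [2,n-1] : π(i-1) < π(i) > π(i+1)}`. -/
def intPeaks (n : ℕ) (π : Equiv.Perm ℕ) : Finset ℕ :=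
  (Finset.Icc 2 (n - 1)).filter fun i => π (i - 1) < π i ∧ π (i + 1) < π i

/-- Every sparse subset of `{2,…,n-1}` is the interior peak set of some permutation in `S_n`. -/
theorem interior_peaks_surjective (n : ℕ) (I : Finset ℕ) (hI : I ⊆ Finset.Icc 2 (n - 1))
    (hsparse : ∀ i ∈ I, i + 1 ∉ I) :
    ∃ π : Equiv.Perm ℕ, IsSn n π ∧ intPeaks n π = I := by
  classical
  have hmem : ∀ i ∈ I, 2 ≤ i ∧ i ≤ n - 1 := fun i hi => Finset.mem_Icc.mp (hI hi)
  set f : ℕ → ℕ := fun k => if k ∈ I then k + 1 else if k - 1 ∈ I then k - 1 else k with hf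
  have hinv : Function.Involutive f := by
    intro k
    by_cases hk : k ∈ I
    · have h1 : k + 1 ∉ I := hsparse k hk
      simp only [hf, if_pos hk, if_neg h1, Nat.add_sub_cancel, if_pos hk]
    · by_cases hk1 : k - 1 ∈ I
      · have hk2 : 2 ≤ k - 1 := (hmem _ hk1).1
        have hkk : k - 1 + 1 = k := by omega
        simp only [hf, if_neg hk, if_pos hk1, hkk]
      · simp only [hf, if_neg hk, if_neg hk1]
  refine ⟨hinv.toPerm, ?_, ?_⟩
  · intro i hi
    have h1 : i ∉ I := by
      intro h; rcases hmem _ h with ⟨h2, h3⟩; omega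
    have h2 : i - 1 ∉ I := by
      intro h; rcases hmem _ h with ⟨h2, h3⟩; omega
    show f i = i
    simp only [hf, if_neg h1, if_neg h2]
  · ext i
    have hp : ∀ k : ℕ, (Function.Involutive.toPerm f hinv) k = f k := fun k => rfl
    simp only [intPeaks, Finset.mem_filter, Finset.mem_Icc, hp]
    constructor
    · rintro ⟨⟨hi2, hin⟩, hl, hr⟩
      by_contra hiI
      have hfi : f i ≤ i := by
        simp only [hf, if_neg hiI]; split <;> omega
      have hfi1 : i + 1 ≤ f (i + 1) := by
        have h2 : i + 1 - 1 = i := by omega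
        simp only [hf, h2, if_neg hiI]
        split <;> omega
      omega
    · intro hiI
      rcases hmem _ hiI with ⟨hi2, hin⟩
      have hfi : f i = i + 1 := by simp only [hf, if_pos hiI]
      have hi1 : i - 1 ∉ I := by
        intro h
        have h' := hsparse _ h
        have he : i - 1 + 1 = i := by omega
        rw [he] at h'
        exact h' hiI
      refine ⟨⟨hi2, hin⟩, ?_, ?_⟩
      · have : f (i - 1) ≤ i := by
          simp only [hf, if_neg hi1]
          split
          · rename_i h
            rcases hmem _ h with ⟨h2, h3⟩; omega
          · omega
        omega
      · have h1 : i + 1 ∉ I := hsparse _ hiI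
        have h2 : i + 1 - 1 = i := by omega
        have : f (i + 1) = i := by simp only [hf, if_neg h1, h2, if_pos hiI]
        omega
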